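/- Fix d ≥ 3. In the polynomial ring ℂ[κ_1,…,κ_d], let K be the 2×(d−1) matrix whose first row is ((2c−1)·κ_c)_{c=1,…,d−1} = (κ_1, 3κ_2, 5κ_3, …, (2d−3)κ_{d−1}) and whose second row is (κ_{c+1})_{c=1,…,d−1} = (κ_2, κ_3, …, κ_d). Then the ideal I_2(K) generated by the 2×2 minors of K is prime, and it equals the vanishing ideal of the image of the inverse Gaussian cumulant parameterization ℂ² → ℂ^d, (μ, ν) ↦ (κ_1(μ,ν), …, κ_d(μ,ν)); that is, a polynomial f ∈ ℂ[κ_1,…,κ_d] vanishes at (κ_1(μ,ν),…,κ_d(μ,ν)) for all μ, ν ∈ ℂ if and only if f ∈ I_2(K). -/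

import Mathlib

open MvPolynomial

/-- The `2 × (d-1)` matrix `K` of the inverse Gaussian cumulant variety, in
`ℂ[κ₁,…,κ_d]` (variable `i : Fin d` corresponds to `κ_{i+1}`): its `c`-th column, for
`1 ≤ c ≤ d-1`, is `((2c-1)·κ_c, κ_{c+1})ᵀ`. -/
noncomputable def invGaussCumulantMatrix (d : ℕ) :
    Matrix (Fin 2) (Fin (d - 1)) (MvPolynomial (Fin d) ℂ) :=
  Matrix.of fun r c =>
    ![C (2 * (c.val : ℂ) + 1) * X ⟨c.val, by have := c.isLt; omega⟩,
      X ⟨c.val + 1, by have := c.isLt; omega⟩] r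

/-- The ideal `I₂(K)` generated by all `2 × 2` minors of `K`. -/
noncomputable def invGaussCumulantIdeal (d : ℕ) : Ideal (MvPolynomial (Fin d) ℂ) :=
  Ideal.span
    { p | ∃ s : Fin 2 → Fin (d - 1), StrictMono s ∧
        p = ((invGaussCumulantMatrix d).submatrix id s).det }

/-- The inverse Gaussian cumulants: `invGaussCumulant μ ν n = κ_{n+1}(μ,ν)`, given by the
recursion `κ₁ = μ` and `κ_r = (2r-3)·μ²·ν·κ_{r-1}` for `r ≥ 2`
(so `κ_r = (2r-3)!!·μ^{2r-1}·ν^{r-1}`). -/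
noncomputable def invGaussCumulant (μ ν : ℂ) : ℕ → ℂ
  | 0 => μ
  | n + 1 => (2 * (n : ℂ) + 1) * μ ^ 2 * ν * invGaussCumulant μ ν n

noncomputable def dfac : ℕ → ℂ
  | 0 => 1
  | n + 1 => (2 * (n:ℂ) + 1) * dfac n

lemma dfac_ne_zero (n : ℕ) : dfac n ≠ 0 := by
  induction n with
  | zero => simp [dfac]
  | succ n ih =>
      have h : (2 * (n:ℂ) + 1) ≠ 0 := by
        intro h
        have := congrArg Complex.re h
        simp at this
        nlinarith [Nat.cast_nonneg (α := ℝ) n, this]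
      simp [dfac, h, ih]

noncomputable def IGpoly (d : ℕ) (i : Fin d) : MvPolynomial (Fin 2) ℂ :=
  C (dfac i.val) * X 0 ^ (2 * i.val + 1) * X 1 ^ i.val

lemma invGaussCumulant_eq (μ ν : ℂ) (n : ℕ) :
    invGaussCumulant μ ν n = dfac n * μ ^ (2 * n + 1) * ν ^ n := by
  induction n with
  | zero => simp [invGaussCumulant, dfac]
  | succ n ih =>
      rw [invGaussCumulant, ih, dfac]
      ring

lemma eval_IGpoly (d : ℕ) (μ ν : ℂ) (f : MvPolynomial (Fin d) ℂ) :
    eval (fun j => ![μ, ν] j) (aeval (IGpoly d) f)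
      = eval (fun i : Fin d => invGaussCumulant μ ν i.val) f := by
  have h1 : eval (fun j => ![μ, ν] j) (aeval (IGpoly d) f)
      = aeval (fun i : Fin d => aeval (fun j => ![μ, ν] j) (IGpoly d i)) f := by
    rw [← comp_aeval_apply]
    rfl
  rw [h1]
  have h2 : (fun i : Fin d => aeval (fun j => ![μ, ν] j) (IGpoly d i))
      = fun i : Fin d => invGaussCumulant μ ν i.val := by
    funext i
    rw [invGaussCumulant_eq]
    simp [IGpoly]
  rw [h2]
  rw [aeval_def, Algebra.algebraMap_self, eval₂_id]

lemma dfac_succ (n : ℕ) : dfac (n + 1) = (2 * (n:ℂ) + 1) * dfac n := rfl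

lemma aeval_det (d : ℕ) (s : Fin 2 → Fin (d-1)) :
    aeval (IGpoly d) ((invGaussCumulantMatrix d).submatrix id s).det = 0 := by
  rw [Matrix.det_fin_two]
  simp only [Matrix.submatrix_apply, id_eq, invGaussCumulantMatrix, Matrix.of_apply,
    Matrix.cons_val_zero, Matrix.cons_val_one, Matrix.head_cons, map_sub, map_mul, aeval_C,
    aeval_X, IGpoly]
  simp only [algebraMap_eq, dfac_succ, map_mul]
  ring

variable {d : ℕ}

noncomputable def kdeg (α : Fin d →₀ ℕ) : ℕ := α.sum fun _ n => n
noncomputable def wt (α : Fin d →₀ ℕ) : ℕ := α.sum fun i n => i.val * n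
noncomputable def Vm (α : Fin d →₀ ℕ) : ℕ := α.sum fun i n => i.val ^ 2 * n
noncomputable def cA (α : Fin d →₀ ℕ) : ℂ := α.prod fun i n => (dfac i.val) ^ n
noncomputable def Ee (α : Fin d →₀ ℕ) : Fin 2 →₀ ℕ :=
  Finsupp.single 0 (2 * wt α + kdeg α) + Finsupp.single 1 (wt α)

lemma cA_ne_zero (α : Fin d →₀ ℕ) : cA α ≠ 0 := by
  rw [cA, Finsupp.prod]
  exact Finset.prod_ne_zero_iff.2 fun i _ => pow_ne_zero _ (dfac_ne_zero _)

lemma aeval_monomial_IG (α : Fin d →₀ ℕ) (c : ℂ) :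
    aeval (IGpoly d) (monomial α c) = monomial (Ee α) (c * cA α) := by
  rw [aeval_monomial]
  have h : (α.prod fun i k => IGpoly d i ^ k)
      = C (cA α) * X 0 ^ (2 * wt α + kdeg α) * X 1 ^ (wt α) := by
    have : (fun (i : Fin d) (k : ℕ) => IGpoly d i ^ k)
        = fun i k => (C (dfac i.val) ^ k * X 0 ^ ((2 * i.val + 1) * k)) * X 1 ^ (i.val * k) := by
      funext i k
      rw [IGpoly]
      rw [mul_pow, mul_pow, ← pow_mul, ← pow_mul]
    rw [this, Finsupp.prod_mul, Finsupp.prod_mul]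
    congr 1
    · congr 1
      · rw [cA, Finsupp.prod, Finsupp.prod, map_prod]
        simp [map_pow]
      · rw [Finsupp.prod, Finset.prod_pow_eq_pow_sum]
        congr 1
        rw [wt, kdeg, Finsupp.sum, Finsupp.sum, Finset.mul_sum, ← Finset.sum_add_distrib]
        apply Finset.sum_congr rfl
        intro i _
        ring
    · rw [Finsupp.prod, Finset.prod_pow_eq_pow_sum, wt, Finsupp.sum]
  rw [h, algebraMap_eq, X_pow_eq_monomial, X_pow_eq_monomial]
  simp [Ee, C_mul_monomial, monomial_mul, mul_comm, mul_assoc, mul_left_comm]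

def Bal (α : Fin d →₀ ℕ) : Prop := ∀ i ∈ α.support, ∀ j ∈ α.support, (i : ℕ) ≤ (j : ℕ) + 1

lemma kdeg_eq_zero {α : Fin d →₀ ℕ} (h : kdeg α = 0) : α = 0 := by
  ext i
  by_cases hi : i ∈ α.support
  · exfalso
    rw [kdeg, Finsupp.sum] at h
    have := Finset.sum_eq_zero_iff.1 h i hi
    exact Finsupp.mem_support_iff.1 hi this
  · simpa using Finsupp.notMem_support_iff.1 hi

lemma bal_apply {α : Fin d →₀ ℕ} (h : Bal α) (hk : kdeg α ≠ 0) (i : Fin d) :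
    α i = if (i : ℕ) = wt α / kdeg α then kdeg α - wt α % kdeg α
      else if (i : ℕ) = wt α / kdeg α + 1 then wt α % kdeg α else 0 := by
  have hne : α.support.Nonempty := by
    rw [Finsupp.support_nonempty_iff]
    intro h0
    exact hk (by rw [h0]; simp [kdeg])
  set m := α.support.min' hne with hmdef
  have hm : m ∈ α.support := Finset.min'_mem _ _
  have hmem : ∀ j ∈ α.support, (j : ℕ) = (m : ℕ) ∨ (j : ℕ) = (m : ℕ) + 1 := by
    intro j hj
    have h1 : m ≤ j := Finset.min'_le _ j hj
    have h2 : (j : ℕ) ≤ (m : ℕ) + 1 := h j hj m hm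
    have h3 : (m : ℕ) ≤ (j : ℕ) := h1
    omega
  set t := ∑ j ∈ α.support.filter (fun j : Fin d => (j : ℕ) = (m : ℕ) + 1), α j with htdef
  have hfilm : α.support.filter (fun j : Fin d => (j : ℕ) = (m : ℕ)) = {m} := by
    ext j
    simp only [Finset.mem_filter, Finset.mem_singleton]
    constructor
    · rintro ⟨_, hj⟩; exact Fin.ext hj
    · rintro rfl; exact ⟨hm, rfl⟩
  have hknot : α.support.filter (fun j : Fin d => ¬ (j : ℕ) = (m : ℕ))
      = α.support.filter (fun j : Fin d => (j : ℕ) = (m : ℕ) + 1) := by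
    ext j
    simp only [Finset.mem_filter]
    constructor
    · rintro ⟨hj, hne'⟩
      rcases hmem j hj with h' | h'
      · exact absurd h' hne'
      · exact ⟨hj, h'⟩
    · rintro ⟨hj, h'⟩
      exact ⟨hj, by omega⟩
  have hk_split : kdeg α = α m + t := by
    rw [kdeg, Finsupp.sum, ← Finset.sum_filter_add_sum_filter_not α.support
      (fun j : Fin d => (j : ℕ) = (m : ℕ)), hfilm, hknot, Finset.sum_singleton]
  have hs_split : wt α = (m : ℕ) * kdeg α + t := by
    rw [wt, Finsupp.sum, ← Finset.sum_filter_add_sum_filter_not α.support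
      (fun j : Fin d => (j : ℕ) = (m : ℕ)), hfilm, hknot, Finset.sum_singleton, hk_split]
    have h1 : ∑ j ∈ α.support.filter (fun j : Fin d => (j : ℕ) = (m : ℕ) + 1), (j : ℕ) * α j
        = ∑ j ∈ α.support.filter (fun j : Fin d => (j : ℕ) = (m : ℕ) + 1), ((m : ℕ) + 1) * α j := by
      apply Finset.sum_congr rfl
      intro j hj
      rw [(Finset.mem_filter.1 hj).2]
    rw [h1, ← Finset.mul_sum, ← htdef]
    ring
  have hαm : α m ≠ 0 := Finsupp.mem_support_iff.1 hm
  have htk : t < kdeg α := by omega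
  have hdiv : wt α / kdeg α = (m : ℕ) := by
    rw [hs_split, Nat.mul_comm, Nat.mul_add_div (by omega), Nat.div_eq_of_lt htk, Nat.add_zero]
  have hmod : wt α % kdeg α = t := by
    rw [hs_split, Nat.mul_comm, Nat.mul_add_mod, Nat.mod_eq_of_lt htk]
  rw [hdiv, hmod]
  by_cases hi : i ∈ α.support
  · rcases hmem i hi with h' | h'
    · have : i = m := Fin.ext h'
      subst this
      rw [if_pos h']
      omega
    · rw [if_neg (by omega), if_pos h']
      have : α.support.filter (fun j : Fin d => (j : ℕ) = (m : ℕ) + 1) = {i} := by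
        ext j
        simp only [Finset.mem_filter, Finset.mem_singleton]
        constructor
        · rintro ⟨_, hj⟩; exact Fin.ext (by omega)
        · rintro rfl; exact ⟨hi, h'⟩
      rw [htdef, this, Finset.sum_singleton]
  · have hα0 : α i = 0 := Finsupp.notMem_support_iff.1 hi
    rw [hα0]
    by_cases h1 : (i : ℕ) = (m : ℕ)
    · exact absurd (Fin.ext h1 : i = m) (by rintro rfl; exact hi hm)
    · rw [if_neg h1]
      by_cases h2 : (i : ℕ) = (m : ℕ) + 1
      · rw [if_pos h2]
        have : α.support.filter (fun j : Fin d => (j : ℕ) = (m : ℕ) + 1) = ∅ := by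
          ext j
          simp only [Finset.mem_filter, Finset.notMem_empty, iff_false, not_and]
          intro hj h'
          exact hi (by rwa [show j = i from Fin.ext (by omega)] at hj)
        rw [htdef, this, Finset.sum_empty]
      · rw [if_neg h2]

lemma bal_inj {α β : Fin d →₀ ℕ} (hα : Bal α) (hβ : Bal β) (hk : kdeg α = kdeg β)
    (hs : wt α = wt β) : α = β := by
  by_cases h0 : kdeg α = 0
  · have h1 : α = 0 := kdeg_eq_zero h0
    have h2 : β = 0 := kdeg_eq_zero (by rw [← hk]; exact h0)
    rw [h1, h2]
  · ext i
    rw [bal_apply hα h0 i, bal_apply hβ (hk ▸ h0) i, hk, hs]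

lemma Ee_inj {α β : Fin d →₀ ℕ} (hα : Bal α) (hβ : Bal β) (h : Ee α = Ee β) : α = β := by
  have e0 := DFunLike.congr_fun h (0 : Fin 2)
  have e1 := DFunLike.congr_fun h (1 : Fin 2)
  simp only [Ee, Finsupp.add_apply, Finsupp.single_apply] at e0 e1
  norm_num at e0 e1
  exact bal_inj hα hβ (by omega) e1

lemma bal_eq_zero (f : MvPolynomial (Fin d) ℂ) (hb : ∀ α ∈ f.support, Bal α)
    (h : aeval (IGpoly d) f = 0) : f = 0 := by
  by_contra hf
  obtain ⟨α₀, hα₀⟩ := (MvPolynomial.support_nonempty.2 hf)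
  have expand : aeval (IGpoly d) f
      = ∑ α ∈ f.support, monomial (Ee α) (coeff α f * cA α) := by
    conv_lhs => rw [f.as_sum]
    rw [map_sum]
    exact Finset.sum_congr rfl fun α _ => aeval_monomial_IG α _
  have hc : coeff (Ee α₀) (aeval (IGpoly d) f) = coeff α₀ f * cA α₀ := by
    rw [expand, MvPolynomial.coeff_sum]
    rw [Finset.sum_eq_single α₀]
    · rw [coeff_monomial, if_pos rfl]
    · intro β hβ hne
      rw [coeff_monomial, if_neg]
      intro he
      exact hne (Ee_inj (hb β hβ) (hb α₀ hα₀) he)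
    · intro h'
      exact absurd hα₀ h'
  rw [h] at hc
  simp only [coeff_zero] at hc
  have := mul_eq_zero.1 hc.symm
  rcases this with h' | h'
  · exact MvPolynomial.mem_support_iff.1 hα₀ h'
  · exact cA_ne_zero α₀ h'
lemma strictMono_pair {n : ℕ} {x y : Fin n} (h : x < y) : StrictMono ![x, y] := by
  intro i j hij
  fin_cases i <;> fin_cases j <;> simp_all

lemma ideal_le_ker (d : ℕ) {g : MvPolynomial (Fin d) ℂ} (hg : g ∈ invGaussCumulantIdeal d) :
    aeval (IGpoly d) g = 0 := by
  have hle : invGaussCumulantIdeal d ≤ RingHom.ker (aeval (IGpoly d)).toRingHom := by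
    rw [invGaussCumulantIdeal, Ideal.span_le]
    rintro p ⟨s, _, rfl⟩
    exact aeval_det d s
  exact hle hg

lemma gen_mem (d : ℕ) (a c' : ℕ) (ha : a < c') (hc' : c' < d - 1) :
    C (2 * (a : ℂ) + 1) * X (⟨a, by omega⟩ : Fin d) * X (⟨c' + 1, by omega⟩ : Fin d)
      - C (2 * (c' : ℂ) + 1) * X (⟨c', by omega⟩ : Fin d) * X (⟨a + 1, by omega⟩ : Fin d)
      ∈ invGaussCumulantIdeal d := by
  apply Ideal.subset_span
  refine ⟨![⟨a, by omega⟩, ⟨c', by omega⟩], strictMono_pair (by simp [Fin.lt_def, ha]), ?_⟩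
  rw [Matrix.det_fin_two]
  simp only [Matrix.submatrix_apply, id_eq, invGaussCumulantMatrix, Matrix.of_apply,
    Matrix.cons_val_zero, Matrix.cons_val_one, Matrix.head_cons]

lemma Vm_add (x y : Fin d →₀ ℕ) : Vm (x + y) = Vm x + Vm y := by
  rw [Vm, Vm, Vm]
  exact Finsupp.sum_add_index' (fun i => by simp) (fun i m n => by ring)

lemma Vm_single (s : Fin d) (n : ℕ) : Vm (Finsupp.single s n) = (s : ℕ) ^ 2 * n := by
  rw [Vm]
  exact Finsupp.sum_single_index (by simp)

lemma two_cast_ne (a : ℕ) : (2 * (a : ℂ) + 1) ≠ 0 := by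
  intro h
  have := congrArg Complex.re h
  simp at this
  nlinarith [Nat.cast_nonneg (α := ℝ) a, this]

lemma reduction (d : ℕ) (α : Fin d →₀ ℕ) (i j : Fin d) (hi : i ∈ α.support)
    (hj : j ∈ α.support) (hlt : (j : ℕ) + 2 ≤ (i : ℕ)) :
    ∃ α' : Fin d →₀ ℕ, Vm α' + 2 ≤ Vm α ∧ ∃ cst : ℂ,
      monomial α (1 : ℂ) - C cst * monomial α' 1 ∈ invGaussCumulantIdeal d := by
  have hd2 : (i : ℕ) < d := i.isLt
  set a : ℕ := (j : ℕ) with hadef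
  set c' : ℕ := (i : ℕ) - 1 with hc'def
  have hac : a < c' := by omega
  have hc'd : c' < d - 1 := by omega
  set j' : Fin d := ⟨a + 1, by omega⟩ with hj'def
  set i' : Fin d := ⟨c', by omega⟩ with hi'def
  set β : Fin d →₀ ℕ := α - Finsupp.single j 1 - Finsupp.single i 1 with hβdef
  have hij : i ≠ j := by intro h; rw [h] at hlt; omega
  have hαj : 1 ≤ α j := Nat.one_le_iff_ne_zero.2 (Finsupp.mem_support_iff.1 hj)
  have hαi : 1 ≤ α i := Nat.one_le_iff_ne_zero.2 (Finsupp.mem_support_iff.1 hi)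
  have hsplit : α = β + Finsupp.single j 1 + Finsupp.single i 1 := by
    ext t
    simp only [hβdef, Finsupp.add_apply, Finsupp.tsub_apply]
    have hx : Finsupp.single j (1:ℕ) t + Finsupp.single i (1:ℕ) t ≤ α t := by
      by_cases h1 : t = j
      · subst h1
        rw [Finsupp.single_eq_same, Finsupp.single_eq_of_ne' hij]
        omega
      · by_cases h2 : t = i
        · subst h2
          rw [Finsupp.single_eq_same, Finsupp.single_eq_of_ne' (fun h => h1 h.symm)]
          omega
        · rw [Finsupp.single_eq_of_ne' (fun h => h1 h.symm),
            Finsupp.single_eq_of_ne' (fun h => h2 h.symm)]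
          omega
    omega
  set α' : Fin d →₀ ℕ := β + Finsupp.single j' 1 + Finsupp.single i' 1 with hα'def
  set u : ℂ := 2 * (a : ℂ) + 1 with hudef
  set v : ℂ := 2 * (c' : ℂ) + 1 with hvdef
  have hu : u ≠ 0 := two_cast_ne a
  refine ⟨α', ?_, v / u, ?_⟩
  · have h1 : Vm α = Vm β + (a ^ 2 + (i : ℕ) ^ 2) := by
      rw [hsplit, Vm_add, Vm_add, Vm_single, Vm_single]
      ring
    have h2 : Vm α' = Vm β + ((a + 1) ^ 2 + c' ^ 2) := by
      rw [hα'def, Vm_add, Vm_add, Vm_single, Vm_single]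
      simp only [hj'def, hi'def]
      ring
    have hb : (i : ℕ) = c' + 1 := by omega
    rw [h1, h2, hb]
    nlinarith [hac]
  · have hXj : (X j : MvPolynomial (Fin d) ℂ) = monomial (Finsupp.single j 1) 1 :=
      by rw [← pow_one (X j), X_pow_eq_monomial]
    have hXi : (X i : MvPolynomial (Fin d) ℂ) = monomial (Finsupp.single i 1) 1 :=
      by rw [← pow_one (X i), X_pow_eq_monomial]
    have hXi' : (X i' : MvPolynomial (Fin d) ℂ) = monomial (Finsupp.single i' 1) 1 :=
      by rw [← pow_one (X i'), X_pow_eq_monomial]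
    have hXj' : (X j' : MvPolynomial (Fin d) ℂ) = monomial (Finsupp.single j' 1) 1 :=
      by rw [← pow_one (X j'), X_pow_eq_monomial]
    have m1 : monomial β (1:ℂ) * (C u * X j * X i) = monomial α u := by
      rw [hXj, hXi, C_mul_monomial, monomial_mul, monomial_mul, ← add_assoc, ← hsplit]
      norm_num
    have m2 : monomial β (1:ℂ) * (C v * X i' * X j') = monomial α' v := by
      rw [hXi', hXj', C_mul_monomial, monomial_mul, monomial_mul]
      have he : β + (Finsupp.single i' 1 + Finsupp.single j' 1) = α' := by
        rw [hα'def, add_assoc, add_comm (Finsupp.single j' (1:ℕ))]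
      rw [he]
      norm_num
    have hG : (C u * X j * X i - C v * X i' * X j' : MvPolynomial (Fin d) ℂ)
        ∈ invGaussCumulantIdeal d := by
      have hgen := gen_mem d a c' hac hc'd
      have e1 : (X (⟨a, by omega⟩ : Fin d) : MvPolynomial (Fin d) ℂ) = X j := by
        congr 1
      have e2 : (X (⟨c' + 1, by omega⟩ : Fin d) : MvPolynomial (Fin d) ℂ) = X i := by
        have hb : c' + 1 = (i : ℕ) := by omega
        congr 1
        exact Fin.ext (by simpa using hb)
      have e3 : (X (⟨c', by omega⟩ : Fin d) : MvPolynomial (Fin d) ℂ) = X i' := rfl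
      have e4 : (X (⟨a + 1, by omega⟩ : Fin d) : MvPolynomial (Fin d) ℂ) = X j' := rfl
      rwa [e1, e2, e3, e4] at hgen
    have key : monomial α (1 : ℂ) - C (v / u) * monomial α' 1
        = C (1 / u) * (monomial β 1 * (C u * X j * X i - C v * X i' * X j')) := by
      rw [mul_sub (monomial β (1:ℂ)), m1, m2, mul_sub, C_mul_monomial, C_mul_monomial,
        C_mul_monomial]
      congr 1
      · congr 1
        field_simp
      · congr 1
        field_simp
    rw [key]
    exact Ideal.mul_mem_left _ _ (Ideal.mul_mem_left _ _ hG)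

lemma support_sub_erase (f : MvPolynomial (Fin d) ℂ) (α : Fin d →₀ ℕ) :
    (f - monomial α (coeff α f)).support ⊆ f.support.erase α := by
  intro β hβ
  have hβ' : coeff β (f - monomial α (coeff α f)) ≠ 0 := MvPolynomial.mem_support_iff.1 hβ
  rw [coeff_sub, coeff_monomial] at hβ'
  by_cases h : α = β
  · subst h
    rw [if_pos rfl] at hβ'
    simp at hβ'
  · rw [if_neg h, sub_zero] at hβ'
    exact Finset.mem_erase.2 ⟨fun he => h he.symm, MvPolynomial.mem_support_iff.2 hβ'⟩

lemma main_ind (d : ℕ) : ∀ (n : ℕ) (f : MvPolynomial (Fin d) ℂ),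
    (∑ α ∈ f.support, Vm α) ≤ n → aeval (IGpoly d) f = 0 →
    f ∈ invGaussCumulantIdeal d := by
  intro n
  induction n using Nat.strong_induction_on with
  | _ n IH =>
    intro f hM hφ
    by_cases hbal : ∀ α ∈ f.support, Bal α
    · rw [bal_eq_zero f hbal hφ]
      exact Ideal.zero_mem _
    · push_neg at hbal
      obtain ⟨α, hαs, hnb⟩ := hbal
      rw [Bal] at hnb
      push_neg at hnb
      obtain ⟨i, hi, j, hj, hlt⟩ := hnb
      obtain ⟨α', hV, cst, helem⟩ := reduction d α i j hi hj (by omega)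
      set g : MvPolynomial (Fin d) ℂ := monomial α (1:ℂ) - C cst * monomial α' 1 with hg
      set f' : MvPolynomial (Fin d) ℂ := f - C (coeff α f) * g with hf'
      have hφ' : aeval (IGpoly d) f' = 0 := by
        rw [hf', map_sub, hφ, map_mul, ideal_le_ker d helem, mul_zero, sub_zero]
      have hrw : f' = (f - monomial α (coeff α f)) + monomial α' (coeff α f * cst) := by
        rw [hf', hg, mul_sub, C_mul_monomial, ← mul_assoc, ← map_mul, C_mul_monomial, mul_one]
        ring
      have hsupp : f'.support ⊆ insert α' (f.support.erase α) := by
        rw [hrw]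
        intro β hβ
        rcases Finset.mem_union.1 (MvPolynomial.support_add hβ) with h' | h'
        · exact Finset.mem_insert.2 (Or.inr (support_sub_erase f α h'))
        · have := MvPolynomial.support_monomial_subset h'
          exact Finset.mem_insert.2 (Or.inl (Finset.mem_singleton.1 this))
      have hsum1 : (∑ β ∈ f'.support, Vm β) ≤ ∑ β ∈ insert α' (f.support.erase α), Vm β :=
        Finset.sum_le_sum_of_subset hsupp
      have hsum2 : (∑ β ∈ insert α' (f.support.erase α), Vm β)
          ≤ Vm α' + ∑ β ∈ f.support.erase α, Vm β := by
        by_cases hmem : α' ∈ f.support.erase α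
        · rw [Finset.insert_eq_self.2 hmem]
          omega
        · rw [Finset.sum_insert hmem]
      have hsum3 : (∑ β ∈ f.support.erase α, Vm β) + Vm α = ∑ β ∈ f.support, Vm β :=
        Finset.sum_erase_add _ _ hαs
      have hlt' : (∑ β ∈ f'.support, Vm β) < n := by omega
      have hf'mem : f' ∈ invGaussCumulantIdeal d :=
        IH _ hlt' f' le_rfl hφ'
      have hfeq : f = f' + C (coeff α f) * g := by
        rw [hf']
        ring
      rw [hfeq]
      exact Ideal.add_mem _ hf'mem (Ideal.mul_mem_left _ _ helem)

/-- `I₂(K)` is prime, and equals the vanishing ideal of the image of the inverse Gaussian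
cumulant parameterization `(μ, ν) ↦ (κ₁(μ,ν), …, κ_d(μ,ν))`. -/
theorem invGauss_cumulantVariety (d : ℕ) (hd : 3 ≤ d) :
    (invGaussCumulantIdeal d).IsPrime ∧
      ∀ f : MvPolynomial (Fin d) ℂ,
        (∀ μ ν : ℂ, eval (fun i : Fin d => invGaussCumulant μ ν i.val) f = 0) ↔
          f ∈ invGaussCumulantIdeal d := by
  have hker : invGaussCumulantIdeal d = RingHom.ker (aeval (IGpoly d)).toRingHom := by
    apply le_antisymm
    · intro g hg
      exact ideal_le_ker d hg
    · intro f hf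
      exact main_ind d _ f le_rfl hf
  constructor
  · rw [hker]
    exact RingHom.ker_isPrime _
  · intro f
    constructor
    · intro h
      have h0 : aeval (IGpoly d) f = 0 := by
        apply MvPolynomial.funext (q := 0)
        intro x
        have hx : x = fun j => ![x 0, x 1] j := by
          funext j
          fin_cases j <;> rfl
        rw [map_zero, hx, eval_IGpoly d (x 0) (x 1) f, h]
      exact main_ind d _ f le_rfl h0
    · intro hf μ ν
      rw [← eval_IGpoly d μ ν f, ideal_le_ker d hf, map_zero]
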